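/- arXiv:1707.06309 — 4 statements merged into one kernel-verified Lean document; each statement's English description precedes it below -/
import Mathlib

section
/- The univariate complex Hermite polynomials satisfy the variant Rodrigues formula H_{m,n}^ν(z, z̄) = (-1)^m ν^n e^{ν z z̄} ∂_{z̄}^m ( z̄^n e^{-ν z z̄} ) for all natural m, n, complex z, and ν > 0. -/
noncomputable def complexHermite (ν : ℝ) (m n : ℕ) (z w : ℂ) : ℂ :=
  (-1)^(m+n) * Complex.exp ((ν : ℂ) * z * w) *
    iteratedDeriv m (fun w' => iteratedDeriv n (fun z' => Complex.exp (-(ν : ℂ) * z' * w')) z) w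

lemma iteratedDeriv_const_mul' (m : ℕ) (c : ℂ) {f : ℂ → ℂ} (hf : ContDiff ℂ m f) (x : ℂ) :
    iteratedDeriv m (fun w => c * f w) x = c * iteratedDeriv m f x := by
  rw [← iteratedDerivWithin_univ, ← iteratedDerivWithin_univ,
    iteratedDerivWithin_const_mul (Set.mem_univ x) uniqueDiffOn_univ c hf.contDiffWithinAt]

theorem complexHermite_variant_rodrigues (ν : ℝ) (hν : 0 < ν) (m n : ℕ) (z : ℂ) :
    complexHermite ν m n z (starRingEnd ℂ z)
      = (-1)^m * (ν : ℂ)^n * Complex.exp ((ν : ℂ) * z * (starRingEnd ℂ z))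
        * iteratedDeriv m (fun w => w^n * Complex.exp (-(ν : ℂ) * z * w))
            (starRingEnd ℂ z) := by
  have h1 : (fun w' : ℂ => iteratedDeriv n (fun z' => Complex.exp (-(ν : ℂ) * z' * w')) z)
      = fun w' : ℂ => ((-1)^n * (ν : ℂ)^n) * (w'^n * Complex.exp (-(ν : ℂ) * z * w')) := by
    funext w'
    have : (fun z' : ℂ => Complex.exp (-(ν : ℂ) * z' * w'))
        = fun z' : ℂ => Complex.exp ((-(ν : ℂ) * w') * z') := by
      funext z'; ring_nf
    rw [this, iteratedDeriv_cexp_const_mul]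
    ring_nf
  have hcd : ContDiff ℂ m (fun w : ℂ => w^n * Complex.exp (-(ν : ℂ) * z * w)) := by
    have : (fun w : ℂ => w^n * Complex.exp (-(ν : ℂ) * z * w))
        = fun w : ℂ => w^n * Complex.exp ((-(ν : ℂ) * z) * w) := by
      simp [mul_assoc]
    rw [this]
    exact (contDiff_id.pow n).mul
      (Complex.contDiff_exp.comp (contDiff_const.mul contDiff_id))
  unfold complexHermite
  rw [h1, iteratedDeriv_const_mul' m _ hcd, pow_add]
  have h2 : ((-1:ℂ))^n * (-1)^n = 1 := by
    rw [← pow_add]; exact Even.neg_one_pow ⟨n, rfl⟩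
  linear_combination ((-1:ℂ)^m * Complex.exp ((ν:ℂ) * z * (starRingEnd ℂ) z) * (ν:ℂ)^n *
    iteratedDeriv m (fun w => w ^ n * Complex.exp (-(ν:ℂ) * z * w)) ((starRingEnd ℂ) z)) * h2
end

section
/- (Mehler formula for complex Hermite polynomials) For ν > 0, naturals m, m', complex t with |t| = 1, and all z, w ∈ ℂ: ∑_{n=0}^∞ (tⁿ/(n! νⁿ)) H_{m,n}^ν(z, z̄) H_{n,m'}^ν(w, w̄) = (-t)^{m'} H_{m,m'}^ν(z - t w, z̄ - t̄ w̄) · exp(ν t w z̄). -/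
lemma iteratedDeriv_cexp (c : ℂ) (n : ℕ) :
    iteratedDeriv n (fun x : ℂ => Complex.exp (c * x)) = fun x => c ^ n * Complex.exp (c * x) := by
  induction n with
  | zero => simp
  | succ n ih =>
    rw [iteratedDeriv_succ, ih]
    funext x
    have h : HasDerivAt (fun x : ℂ => c ^ n * Complex.exp (c * x))
        (c ^ (n+1) * Complex.exp (c*x)) x := by
      have := (((hasDerivAt_id x).const_mul c).cexp).const_mul (c ^ n)
      simpa [pow_succ, mul_comm, mul_assoc, mul_left_comm] using this
    exact h.deriv

lemma contDiff_pow_exp (c : ℂ) (n : ℕ) : ContDiff ℂ ⊤ (fun x : ℂ => x^n * Complex.exp (c * x)) :=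
  (contDiff_id.pow n).mul (Complex.contDiff_exp.comp (contDiff_const.mul contDiff_id))

lemma iteratedDeriv_cmul {f : ℂ → ℂ} (hf : ContDiff ℂ ⊤ f) (c : ℂ) (m : ℕ) (x : ℂ) :
    iteratedDeriv m (fun y => c * f y) x = c * iteratedDeriv m f x := by
  simp_rw [← iteratedDerivWithin_univ]
  exact iteratedDerivWithin_const_mul (Set.mem_univ x) uniqueDiffOn_univ c
    ((hf.of_le le_top).contDiffWithinAt)

lemma iteratedDeriv_add' {f g : ℂ → ℂ} (hf : ContDiff ℂ ⊤ f) (hg : ContDiff ℂ ⊤ g)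
    (m : ℕ) (x : ℂ) :
    iteratedDeriv m (fun y => f y + g y) x = iteratedDeriv m f x + iteratedDeriv m g x := by
  simp_rw [← iteratedDerivWithin_univ]
  exact iteratedDerivWithin_add (Set.mem_univ x) uniqueDiffOn_univ
    ((hf.of_le le_top).contDiffWithinAt) ((hg.of_le le_top).contDiffWithinAt)

lemma exp_mul_exp_neg (a : ℂ) : Complex.exp a * Complex.exp (-a) = 1 := by
  rw [← Complex.exp_add]; simp

lemma negpow (x : ℂ) (k : ℕ) : (-1:ℂ)^k * (-x)^k = x^k := by
  rw [← mul_pow]; ring_nf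

lemma complexHermite_rep (ν : ℝ) (m n : ℕ) (z w : ℂ) :
    complexHermite ν m n z w = (-1)^(m+n) * (-(ν:ℂ))^n * Complex.exp ((ν:ℂ)*z*w) *
      iteratedDeriv m (fun x => x^n * Complex.exp ((-(ν:ℂ)*z) * x)) w := by
  unfold complexHermite
  have key : (fun w' => iteratedDeriv n (fun z' => Complex.exp (-(ν:ℂ) * z' * w')) z)
      = fun w' => (-(ν:ℂ))^n * (w'^n * Complex.exp ((-(ν:ℂ)*z) * w')) := by
    funext w'
    have h1 : (fun z' => Complex.exp (-(ν:ℂ) * z' * w')) =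
        fun z' => Complex.exp ((-(ν:ℂ)*w') * z') := by
      funext z'
      rw [show -(ν:ℂ) * z' * w' = (-(ν:ℂ)*w') * z' from by ring]
    rw [h1, iteratedDeriv_cexp]
    beta_reduce
    rw [show (-(ν:ℂ)*w') * z = (-(ν:ℂ)*z) * w' from by ring, mul_pow]
    ring
  rw [key, iteratedDeriv_cmul (contDiff_pow_exp _ n) _ m w]
  ring

lemma complexHermite_zero_left (ν : ℝ) (n : ℕ) (z w : ℂ) :
    complexHermite ν 0 n z w = (ν:ℂ)^n * w^n := by
  rw [complexHermite_rep, iteratedDeriv_zero]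
  rw [show (-(ν:ℂ)*z) * w = -((ν:ℂ)*z*w) from by ring, zero_add]
  have hE := exp_mul_exp_neg ((ν:ℂ)*z*w)
  have hA := negpow ((ν:ℂ)) n
  linear_combination ((-1:ℂ)^n * (-(ν:ℂ))^n * w^n) * hE + (w^n) * hA

lemma complexHermite_zero_right (ν : ℝ) (m : ℕ) (z w : ℂ) :
    complexHermite ν m 0 z w = (ν:ℂ)^m * z^m := by
  rw [complexHermite_rep]
  have h1 : (fun x : ℂ => x^0 * Complex.exp ((-(ν:ℂ)*z) * x)) =
      fun x => Complex.exp ((-(ν:ℂ)*z) * x) := by funext x; simp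
  rw [h1, iteratedDeriv_cexp]
  beta_reduce
  rw [show (-(ν:ℂ)*z) * w = -((ν:ℂ)*z*w) from by ring, add_zero]
  have hE := exp_mul_exp_neg ((ν:ℂ)*z*w)
  have hA := negpow ((ν:ℂ)*z) m
  rw [mul_pow] at hA
  linear_combination ((-1:ℂ)^m * (-(ν:ℂ)*z)^m) * hE + hA

lemma iteratedDeriv_id_mul {f : ℂ → ℂ} (hf : ContDiff ℂ ⊤ f) (m : ℕ) :
    iteratedDeriv m (fun y => y * f y) = fun x =>
      x * iteratedDeriv m f x + (m:ℂ) * iteratedDeriv (m-1) f x := by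
  induction m with
  | zero => simp
  | succ m ih =>
    have hD : ∀ k, Differentiable ℂ (iteratedDeriv k f) := fun k =>
      hf.differentiable_iteratedDeriv k (by simp)
    rw [iteratedDeriv_succ, ih]
    funext x
    have h1 : HasDerivAt (fun y => y * iteratedDeriv m f y + (m:ℂ) * iteratedDeriv (m-1) f y)
        (1 * iteratedDeriv m f x + x * deriv (iteratedDeriv m f) x
          + (m:ℂ) * deriv (iteratedDeriv (m-1) f) x) x :=
      ((hasDerivAt_id x).mul ((hD m x).hasDerivAt)).add
        (((hD (m-1) x).hasDerivAt).const_mul (m:ℂ))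
    rw [h1.deriv]
    have h2 : (m:ℂ) * deriv (iteratedDeriv (m-1) f) x = (m:ℂ) * iteratedDeriv m f x := by
      cases m with
      | zero => simp
      | succ k => simp only [Nat.succ_sub_one, ← iteratedDeriv_succ]
    rw [h2, ← iteratedDeriv_succ]
    simp only [Nat.add_sub_cancel]
    push_cast
    ring

lemma deriv_pow_exp (c : ℂ) (n : ℕ) :
    deriv (fun x : ℂ => x^(n+1) * Complex.exp (c * x)) =
      fun x => ((n:ℂ)+1) * (x^n * Complex.exp (c*x)) + c * (x^(n+1) * Complex.exp (c*x)) := by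
  funext x
  have h := (hasDerivAt_pow (n+1) x).mul (((hasDerivAt_id x).const_mul c).cexp)
  simp only [id_eq] at h
  rw [show (fun x : ℂ => x^(n+1) * Complex.exp (c * x)) =
    ((fun x => x ^ (n + 1)) * fun x => Complex.exp (c * x)) from rfl, h.deriv]
  push_cast [Nat.add_sub_cancel]
  ring

lemma complexHermite_succ_right (ν : ℝ) (m n : ℕ) (z w : ℂ) :
    complexHermite ν m (n+1) z w = (ν:ℂ)*w*complexHermite ν m n z w
      - (m:ℂ)*(ν:ℂ)*complexHermite ν (m-1) n z w := by
  cases m with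
  | zero =>
    simp only [complexHermite_zero_left, Nat.cast_zero, zero_mul, mul_zero, sub_zero, pow_succ]
    ring
  | succ m =>
    simp only [Nat.add_sub_cancel]
    rw [complexHermite_rep ν (m+1) (n+1), complexHermite_rep ν (m+1) n,
      complexHermite_rep ν m n]
    have hfun : (fun x : ℂ => x^(n+1) * Complex.exp ((-(ν:ℂ)*z) * x))
        = fun y => y * (y^n * Complex.exp ((-(ν:ℂ)*z) * y)) := by
      funext y; ring
    rw [hfun, iteratedDeriv_id_mul (contDiff_pow_exp _ n) (m+1)]
    beta_reduce
    simp only [Nat.add_sub_cancel, Nat.succ_sub_one]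
    push_cast
    simp only [pow_succ, pow_add]
    ring

lemma complexHermite_succ_left (ν : ℝ) (m n : ℕ) (z w : ℂ) :
    complexHermite ν (m+1) n z w = (ν:ℂ)*z*complexHermite ν m n z w
      - (n:ℂ)*(ν:ℂ)*complexHermite ν m (n-1) z w := by
  cases n with
  | zero =>
    simp only [complexHermite_zero_right, Nat.cast_zero, zero_mul, mul_zero, sub_zero, pow_succ]
    ring
  | succ n =>
    simp only [Nat.add_sub_cancel]
    rw [complexHermite_rep ν (m+1) (n+1), complexHermite_rep ν m (n+1),
      complexHermite_rep ν m n]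
    rw [iteratedDeriv_succ']
    rw [deriv_pow_exp (-(ν:ℂ)*z) n]
    rw [iteratedDeriv_add' (contDiff_const.mul (contDiff_pow_exp (-(ν:ℂ)*z) n))
      (contDiff_const.mul (contDiff_pow_exp (-(ν:ℂ)*z) (n+1))) m w]
    rw [iteratedDeriv_cmul (contDiff_pow_exp (-(ν:ℂ)*z) n) ((n:ℂ)+1) m w,
      iteratedDeriv_cmul (contDiff_pow_exp (-(ν:ℂ)*z) (n+1)) (-(ν:ℂ)*z) m w]
    push_cast
    simp only [pow_succ, pow_add]
    ring

lemma hasSum_shift {g : ℕ → ℂ} {a : ℂ} (h0 : g 0 = 0) (h : HasSum (fun n => g (n+1)) a) :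
    HasSum g a := by
  simpa [h0] using (hasSum_nat_add_iff (f := g) 1).mp h

lemma div_fact_succ (ν t : ℂ) (hν : ν ≠ 0) (n : ℕ) :
    t^(n+1) / (((n+1).factorial : ℂ) * ν^(n+1)) * (((n:ℂ)+1) * ν)
      = t * (t^n / ((n.factorial:ℂ) * ν^n)) := by
  have hf : (n.factorial : ℂ) ≠ 0 := Nat.cast_ne_zero.mpr n.factorial_ne_zero
  have h1 : ((n:ℂ)+1) ≠ 0 := Nat.cast_add_one_ne_zero n
  rw [Nat.factorial_succ]
  push_cast
  field_simp
  ring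

lemma mehler_key (ν : ℝ) (hν : (ν:ℂ) ≠ 0) (t s : ℂ) (hts : t * s = 1) (z w u v : ℂ) :
    ∀ m m' : ℕ,
      HasSum (fun n : ℕ => t^n / ((n.factorial : ℂ) * (ν : ℂ)^n)
          * complexHermite ν m n z u * complexHermite ν n m' w v)
        ((-t)^m' * complexHermite ν m m' (z - t*w) (u - s*v)
          * Complex.exp ((ν:ℂ)*t*w*u)) := by
  intro m
  induction m with
  | zero =>
    intro m'
    induction m' with
    | zero =>
      have he : HasSum (fun n : ℕ => ((ν:ℂ)*t*w*u)^n / (n.factorial:ℂ))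
          (Complex.exp ((ν:ℂ)*t*w*u)) := by
        rw [Complex.exp_eq_exp_ℂ]
        exact NormedSpace.expSeries_div_hasSum_exp _
      have hfun : (fun n : ℕ => t^n / ((n.factorial : ℂ) * (ν : ℂ)^n)
          * complexHermite ν 0 n z u * complexHermite ν n 0 w v)
          = fun n : ℕ => ((ν:ℂ)*t*w*u)^n / (n.factorial:ℂ) := by
        funext n
        rw [complexHermite_zero_left, complexHermite_zero_right]
        have hf : (n.factorial : ℂ) ≠ 0 := Nat.cast_ne_zero.mpr n.factorial_ne_zero
        field_simp
        ring
      have hval : (-t)^(0:ℕ) * complexHermite ν 0 0 (z - t*w) (u - s*v)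
          * Complex.exp ((ν:ℂ)*t*w*u) = Complex.exp ((ν:ℂ)*t*w*u) := by
        rw [complexHermite_zero_left]; simp
      rw [hfun, hval]; exact he
    | succ m' ih =>
      set g : ℕ → ℂ := fun n => t^n / ((n.factorial:ℂ) * (ν:ℂ)^n)
        * complexHermite ν 0 n z u
        * ((n:ℂ)*(ν:ℂ)*complexHermite ν (n-1) m' w v) with hgdef
      have hg0 : g 0 = 0 := by simp [hgdef]
      have hgsucc : (fun n : ℕ => g (n+1)) = fun n => (t*(ν:ℂ)*u) *
          (t^n / ((n.factorial:ℂ) * (ν:ℂ)^n) * complexHermite ν 0 n z u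
            * complexHermite ν n m' w v) := by
        funext n
        simp only [hgdef, Nat.add_sub_cancel]
        rw [complexHermite_zero_left, complexHermite_zero_left]
        have hkey := div_fact_succ (ν:ℂ) t hν n
        push_cast
        linear_combination ((ν:ℂ)^(n+1) * u^(n+1) * complexHermite ν n m' w v) * hkey
      have hgsum : HasSum g ((t*(ν:ℂ)*u) * ((-t)^m' * complexHermite ν 0 m' (z - t*w) (u - s*v)
          * Complex.exp ((ν:ℂ)*t*w*u))) := by
        apply hasSum_shift hg0
        rw [hgsucc]
        exact ih.mul_left _
      have htarget : (fun n : ℕ => t^n / ((n.factorial : ℂ) * (ν : ℂ)^n)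
          * complexHermite ν 0 n z u * complexHermite ν n (m'+1) w v)
          = fun n => ((ν:ℂ)*v) * (t^n / ((n.factorial:ℂ) * (ν:ℂ)^n)
            * complexHermite ν 0 n z u * complexHermite ν n m' w v) - g n := by
        funext n
        rw [complexHermite_succ_right ν n m' w v]
        simp only [hgdef]
        ring
      rw [htarget]
      have hcomb := (ih.mul_left ((ν:ℂ)*v)).sub hgsum
      convert hcomb using 1
      · rfl
      rw [complexHermite_zero_left, complexHermite_zero_left]
      simp only [pow_succ]
      linear_combination ((ν:ℂ) * v * ((-t)^m' * ((ν:ℂ)^m' * (u-s*v)^m')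
        * Complex.exp ((ν:ℂ)*t*w*u))) * hts
  | succ m ihm =>
    intro m'
    set g : ℕ → ℂ := fun n => t^n / ((n.factorial:ℂ) * (ν:ℂ)^n)
      * ((n:ℂ)*(ν:ℂ)*complexHermite ν m (n-1) z u)
      * complexHermite ν n m' w v with hgdef
    have hg0 : g 0 = 0 := by simp [hgdef]
    have hgsucc : (fun n : ℕ => g (n+1)) = fun n =>
        (t*(ν:ℂ)*w) * (t^n / ((n.factorial:ℂ) * (ν:ℂ)^n)
          * complexHermite ν m n z u * complexHermite ν n m' w v)
        - (t*(m':ℂ)*(ν:ℂ)) * (t^n / ((n.factorial:ℂ) * (ν:ℂ)^n)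
          * complexHermite ν m n z u * complexHermite ν n (m'-1) w v) := by
      funext n
      simp only [hgdef, Nat.add_sub_cancel]
      rw [complexHermite_succ_left ν n m' w v]
      have hkey := div_fact_succ (ν:ℂ) t hν n
      push_cast
      linear_combination (complexHermite ν m n z u * ((ν:ℂ)*w*complexHermite ν n m' w v
        - (m':ℂ)*(ν:ℂ)*complexHermite ν n (m'-1) w v)) * hkey
    have hgsum : HasSum g ((t*(ν:ℂ)*w) * ((-t)^m' * complexHermite ν m m' (z - t*w) (u - s*v)
        * Complex.exp ((ν:ℂ)*t*w*u))
      - (t*(m':ℂ)*(ν:ℂ)) * ((-t)^(m'-1) * complexHermite ν m (m'-1) (z - t*w) (u - s*v)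
        * Complex.exp ((ν:ℂ)*t*w*u))) := by
      apply hasSum_shift hg0
      rw [hgsucc]
      exact ((ihm m').mul_left _).sub (((ihm (m'-1)).mul_left _))
    have htarget : (fun n : ℕ => t^n / ((n.factorial : ℂ) * (ν : ℂ)^n)
        * complexHermite ν (m+1) n z u * complexHermite ν n m' w v)
        = fun n => ((ν:ℂ)*z) * (t^n / ((n.factorial:ℂ) * (ν:ℂ)^n)
          * complexHermite ν m n z u * complexHermite ν n m' w v) - g n := by
      funext n
      rw [complexHermite_succ_left ν m n z u]
      simp only [hgdef]
      ring
    rw [htarget]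
    have hcomb := ((ihm m').mul_left ((ν:ℂ)*z)).sub hgsum
    convert hcomb using 1
    · rfl
    rw [complexHermite_succ_left ν m m' (z - t*w) (u - s*v)]
    have hpow : -((m':ℂ) * (-t)^(m':ℕ)) = t * (m':ℂ) * (-t)^(m'-1) := by
      cases m' with
      | zero => simp
      | succ k => simp only [Nat.add_sub_cancel, pow_succ, Nat.cast_add, Nat.cast_one]; ring
    linear_combination ((ν:ℂ) * complexHermite ν m (m'-1) (z - t*w) (u - s*v)
      * Complex.exp ((ν:ℂ)*t*w*u)) * hpow

theorem complexHermite_mehler (ν : ℝ) (hν : 0 < ν) (m m' : ℕ) (t : ℂ) (ht : ‖t‖ = 1)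
    (z w : ℂ) :
    HasSum (fun n : ℕ => t^n / ((n.factorial : ℂ) * (ν : ℂ)^n)
        * complexHermite ν m n z (starRingEnd ℂ z)
        * complexHermite ν n m' w (starRingEnd ℂ w))
      ((-t)^m' * complexHermite ν m m' (z - t * w) (starRingEnd ℂ (z - t * w))
        * Complex.exp ((ν : ℂ) * t * w * (starRingEnd ℂ z))) := by
  have hν' : ((ν:ℝ):ℂ) ≠ 0 := Complex.ofReal_ne_zero.mpr (ne_of_gt hν)
  have hns : Complex.normSq t = 1 := by
    rw [Complex.normSq_eq_norm_sq, ht]; norm_num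
  have hts : t * (starRingEnd ℂ) t = 1 := by
    rw [Complex.mul_conj, hns, Complex.ofReal_one]
  have h := mehler_key ν hν' t (starRingEnd ℂ t) hts z w (starRingEnd ℂ z) (starRingEnd ℂ w) m m'
  rw [map_sub, map_mul]
  exact h
end

section
/- The diagonal complex Hermite polynomial is expressible via Laguerre polynomials: H_{m,m}^ν(ξ, ξ̄) = (-ν)^m m! L_m^{(0)}(ν |ξ|²) for all natural m, complex ξ, and ν > 0. -/
open Finset

lemma deriv_pow_mul_cexp (a : ℂ) (j : ℕ) (w : ℂ) :
    deriv (fun w : ℂ => w ^ j * Complex.exp (a * w)) w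
      = (j : ℂ) * w ^ (j - 1) * Complex.exp (a * w) + a * (w ^ j * Complex.exp (a * w)) := by
  have h1 : HasDerivAt (fun w : ℂ => w ^ j) ((j : ℂ) * w ^ (j - 1)) w := hasDerivAt_pow j w
  have h2 : HasDerivAt (fun w : ℂ => Complex.exp (a * w)) (Complex.exp (a * w) * a) w := by
    simpa using ((hasDerivAt_id w).const_mul a).cexp
  have := (h1.fun_mul h2).deriv
  rw [this]; ring

lemma diffAt_pow_mul_cexp (a : ℂ) (j : ℕ) (w : ℂ) :
    DifferentiableAt ℂ (fun w : ℂ => w ^ j * Complex.exp (a * w)) w := by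
  exact (differentiableAt_id.pow j).mul (((differentiableAt_const a).mul differentiableAt_id).cexp)

lemma key (a : ℂ) (n : ℕ) : ∀ m : ℕ,
    iteratedDeriv m (fun w : ℂ => w ^ n * Complex.exp (a * w))
      = fun w : ℂ => ∑ k ∈ range (m + 1),
          ((m.choose k : ℂ) * (n.descFactorial k : ℂ) * a ^ (m - k)) *
            (w ^ (n - k) * Complex.exp (a * w)) := by
  intro m
  induction m with
  | zero => simp
  | succ m ih =>
    rw [iteratedDeriv_succ, ih]
    funext w
    rw [deriv_fun_sum (fun k _ => ((diffAt_pow_mul_cexp a (n - k) w).const_mul _))]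
    have step : ∀ k, deriv (fun w : ℂ =>
        ((m.choose k : ℂ) * (n.descFactorial k : ℂ) * a ^ (m - k)) *
          (w ^ (n - k) * Complex.exp (a * w))) w
        = ((m.choose k : ℂ) * (n.descFactorial (k+1) : ℂ) * a ^ (m - k)) *
            (w ^ (n - (k+1)) * Complex.exp (a * w))
          + ((m.choose k : ℂ) * (n.descFactorial k : ℂ) * a ^ (m + 1 - k)) *
            (w ^ (n - k) * Complex.exp (a * w)) := by
      intro k
      rw [deriv_const_mul _ (diffAt_pow_mul_cexp a (n - k) w), deriv_pow_mul_cexp]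
      have hd : (n.descFactorial (k+1) : ℂ) = ((n - k : ℕ) : ℂ) * (n.descFactorial k : ℂ) := by
        rw [Nat.descFactorial_succ]; push_cast; ring
      have hsub : n - (k+1) = n - k - 1 := by omega
      by_cases hk : k ≤ m
      · have ha : a ^ (m + 1 - k) = a * a ^ (m - k) := by
          rw [← pow_succ']; congr 1; omega
        rw [hd, hsub, ha]; ring
      · have h1 : m - k = 0 := by omega
        have h2 : m + 1 - k = m + 1 - k := rfl
        have hc : (m.choose k : ℂ) = 0 := by
          norm_cast; exact Nat.choose_eq_zero_of_lt (by omega)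
        rw [hc]; ring
    rw [Finset.sum_congr rfl (fun k _ => step k), Finset.sum_add_distrib]
    -- reindex first sum
    have e1 : ∑ k ∈ range (m + 1),
        ((m.choose k : ℂ) * (n.descFactorial (k+1) : ℂ) * a ^ (m - k)) *
          (w ^ (n - (k+1)) * Complex.exp (a * w))
        = ∑ k ∈ range (m + 2),
        ((if k = 0 then 0 else (m.choose (k-1) : ℂ)) * (n.descFactorial k : ℂ) * a ^ (m + 1 - k)) *
          (w ^ (n - k) * Complex.exp (a * w)) := by
      conv_rhs => rw [Finset.sum_range_succ']
      simp [Nat.succ_sub_succ]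
    have e2 : ∑ k ∈ range (m + 1),
        ((m.choose k : ℂ) * (n.descFactorial k : ℂ) * a ^ (m + 1 - k)) *
          (w ^ (n - k) * Complex.exp (a * w))
        = ∑ k ∈ range (m + 2),
        ((if k = m + 1 then 0 else (m.choose k : ℂ)) * (n.descFactorial k : ℂ) * a ^ (m + 1 - k)) *
          (w ^ (n - k) * Complex.exp (a * w)) := by
      conv_rhs => rw [Finset.sum_range_succ]
      simp
      apply Finset.sum_congr rfl
      intro k hk
      simp only [Finset.mem_range] at hk
      rw [if_neg (by omega)]
    rw [e1, e2, ← Finset.sum_add_distrib]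
    apply Finset.sum_congr rfl
    intro k hk
    simp only [Finset.mem_range] at hk
    have hch : ((m+1).choose k : ℂ)
        = (if k = 0 then 0 else (m.choose (k-1) : ℂ)) + (if k = m + 1 then 0 else (m.choose k : ℂ)) := by
      rcases Nat.eq_zero_or_pos k with h0 | h0
      · subst h0; simp
      · rcases eq_or_ne k (m+1) with h1 | h1
        · subst h1; simp [Nat.choose_self, Nat.choose_succ_self]
        · obtain ⟨j, rfl⟩ : ∃ j, k = j + 1 := ⟨k - 1, by omega⟩
          rw [if_neg (by omega), if_neg h1, Nat.choose_succ_succ]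
          push_cast; simp
    rw [hch]; ring


lemma itd_const_mul {n : ℕ} {f : ℂ → ℂ} (hf : ContDiff ℂ n f) (c x : ℂ) :
    iteratedDeriv n (fun z => c * f z) x = c * iteratedDeriv n f x := by
  have h : (fun z => c * f z) = c • f := rfl
  rw [h, iteratedDeriv_eq_iteratedFDeriv, iteratedDeriv_eq_iteratedFDeriv,
    iteratedFDeriv_const_smul_apply hf.contDiffAt]
  simp

noncomputable def laguerre (m : ℕ) (x : ℂ) : ℂ :=
  ∑ k ∈ Finset.range (m+1), (m.choose k : ℂ) * (-x)^k / (k.factorial : ℂ)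

theorem complexHermite_diagonal_laguerre (ν : ℝ) (hν : 0 < ν) (m : ℕ) (ξ : ℂ) :
    complexHermite ν m m ξ (starRingEnd ℂ ξ)
      = (-(ν : ℂ))^m * (m.factorial : ℂ) * laguerre m ((ν : ℂ) * Complex.normSq ξ) := by
  set c : ℂ := starRingEnd ℂ ξ with hc
  set a : ℂ := -(ν : ℂ) * ξ with ha
  have hg : (fun w' : ℂ => iteratedDeriv m (fun z' => Complex.exp (-(ν : ℂ) * z' * w')) ξ)
      = fun w' => (-(ν : ℂ))^m * (w' ^ m * Complex.exp (a * w')) := by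
    funext w'
    have h1 : (fun z' : ℂ => Complex.exp (-(ν : ℂ) * z' * w'))
        = fun z' => Complex.exp ((-(ν : ℂ) * w') * z') := by
      funext z'; ring_nf
    rw [h1, iteratedDeriv_cexp_const_mul]
    simp only
    rw [show (-(ν : ℂ) * w') * ξ = a * w' by rw [ha]; ring, mul_pow]
    ring
  have hcd : ContDiff ℂ m (fun w : ℂ => w ^ m * Complex.exp (a * w)) :=
    (contDiff_id.pow m).mul ((contDiff_const.mul contDiff_id).cexp)
  rw [complexHermite, hg, itd_const_mul hcd, key a m m]
  simp only
  have hac : a * c = -((ν : ℂ) * (Complex.normSq ξ : ℂ)) := by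
    rw [ha, hc, mul_assoc, Complex.mul_conj]; ring
  have hterm : ∀ k ∈ Finset.range (m + 1),
      ((m.choose k : ℂ) * (m.descFactorial k : ℂ) * a ^ (m - k)) *
        (c ^ (m - k) * Complex.exp (a * c))
      = (m.choose k : ℂ) * (m.descFactorial k : ℂ)
          * (-((ν : ℂ) * (Complex.normSq ξ : ℂ))) ^ (m - k) * Complex.exp (a * c) := by
    intro k _
    rw [← hac, mul_pow]; ring
  rw [Finset.sum_congr rfl hterm, ← Finset.sum_mul]
  have hexp : Complex.exp ((ν : ℂ) * ξ * c) * Complex.exp (a * c) = 1 := by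
    rw [← Complex.exp_add, ha]
    rw [show (ν : ℂ) * ξ * c + -(ν : ℂ) * ξ * c = 0 by ring, Complex.exp_zero]
  have hsum : ∑ k ∈ Finset.range (m + 1),
      (m.choose k : ℂ) * (m.descFactorial k : ℂ) * (-((ν : ℂ) * (Complex.normSq ξ : ℂ))) ^ (m - k)
      = (m.factorial : ℂ) * laguerre m ((ν : ℂ) * Complex.normSq ξ) := by
    rw [laguerre, Finset.mul_sum]
    rw [← Finset.sum_range_reflect]
    apply Finset.sum_congr rfl
    intro k hk
    simp only [Finset.mem_range] at hk
    have hkm : k ≤ m := by omega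
    simp only [Nat.add_sub_cancel]
    have h4 : m - (m - k) = k := by omega
    have h2 : m.choose (m - k) = m.choose k := Nat.choose_symm hkm
    have h1 : (k.factorial : ℂ) * (m.descFactorial (m - k) : ℂ) = (m.factorial : ℂ) := by
      have h5 := Nat.factorial_mul_descFactorial (Nat.sub_le m k)
      rw [h4] at h5
      exact_mod_cast congrArg (Nat.cast (R := ℂ)) h5
    have h3 : (k.factorial : ℂ) ≠ 0 := by
      exact_mod_cast (Nat.factorial_ne_zero _)
    rw [h2, h4]
    field_simp
    rw [← h1]; ring
  rw [hsum]
  rw [show (-1 : ℂ) ^ (m + m) * Complex.exp ((ν : ℂ) * ξ * c) *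
      ((-(ν : ℂ)) ^ m * ((m.factorial : ℂ) * laguerre m ((ν : ℂ) * Complex.normSq ξ) * Complex.exp (a * c)))
      = (-1 : ℂ) ^ (m + m) * (Complex.exp ((ν : ℂ) * ξ * c) * Complex.exp (a * c)) *
        ((-(ν : ℂ)) ^ m * ((m.factorial : ℂ) * laguerre m ((ν : ℂ) * Complex.normSq ξ))) by ring,
    hexp]
  rw [← two_mul, pow_mul]
  norm_num
  ring
end

section
/- The squared L² norm of the complex Hermite polynomial with respect to the Gaussian measure is ∫_ℂ |H_{m,n}^ν(z, z̄)|² e^{-ν|z|²} dλ(z) = (π/ν) m! n! ν^{m+n} for all naturals m, n and ν > 0. Moreover, H_{m,n}^ν and H_{m',n'}^ν are orthogonal in L²(ℂ, e^{-ν|z|²}dλ) whenever (m, n) ≠ (m', n'). -/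
open Finset MeasureTheory Real Set

lemma iteratedDeriv_cexp_mul (c : ℂ) (n : ℕ) :
    iteratedDeriv n (fun x => Complex.exp (c * x)) = fun x => c ^ n * Complex.exp (c * x) := by
  induction n with
  | zero => simp
  | succ n ih =>
    funext x
    rw [iteratedDeriv_succ, ih]
    have h := ((((hasDerivAt_id x).const_mul c).cexp).const_mul (c ^ n)).deriv
    simp only [id_eq] at h
    rw [h]; ring

lemma iteratedDeriv_pow_mul_cexp (c : ℂ) (n : ℕ) : ∀ m : ℕ,
    iteratedDeriv m (fun w => w ^ n * Complex.exp (c * w)) = fun w =>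
      ∑ k ∈ range (m+1), (m.choose k : ℂ) * (n.descFactorial k : ℂ) * w ^ (n-k) * c ^ (m-k)
        * Complex.exp (c * w) := by
  intro m
  induction m with
  | zero => simp
  | succ m ih =>
    rw [iteratedDeriv_succ, ih]
    funext w
    have hd : ∀ j : ℕ, HasDerivAt (fun w : ℂ => w ^ j * Complex.exp (c * w))
        ((j : ℂ) * w ^ (j-1) * Complex.exp (c * w) + w ^ j * (c * Complex.exp (c * w))) w := by
      intro j
      have h1 := (hasDerivAt_pow j w).fun_mul (((hasDerivAt_id w).const_mul c).cexp)
      simp only [id_eq] at h1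
      exact h1.congr_deriv (by ring)
    have hder : deriv (fun w : ℂ => ∑ k ∈ range (m+1),
        (m.choose k : ℂ) * (n.descFactorial k : ℂ) * w ^ (n-k) * c ^ (m-k)
          * Complex.exp (c * w)) w
        = ∑ k ∈ range (m+1), (m.choose k : ℂ) * (n.descFactorial k : ℂ) * c ^ (m-k) *
            (((n-k : ℕ) : ℂ) * w ^ (n-k-1) * Complex.exp (c * w)
              + w ^ (n-k) * (c * Complex.exp (c * w))) := by
      have hsum : ∀ k ∈ range (m+1), HasDerivAt (fun w : ℂ =>
          (m.choose k : ℂ) * (n.descFactorial k : ℂ) * w ^ (n-k) * c ^ (m-k)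
            * Complex.exp (c * w))
          ((m.choose k : ℂ) * (n.descFactorial k : ℂ) * c ^ (m-k) *
            (((n-k : ℕ) : ℂ) * w ^ (n-k-1) * Complex.exp (c * w)
              + w ^ (n-k) * (c * Complex.exp (c * w)))) w := by
        intro k _
        have h2 := ((hd (n-k)).const_mul
          ((m.choose k : ℂ) * (n.descFactorial k : ℂ) * c ^ (m-k)))
        exact h2.congr_of_eventuallyEq (Filter.Eventually.of_forall fun y => by ring)
      exact (HasDerivAt.fun_sum hsum).deriv
    rw [hder]
    have hsplit : ∀ k ∈ range (m+1),
        (m.choose k : ℂ) * (n.descFactorial k : ℂ) * c ^ (m-k) *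
          (((n-k : ℕ) : ℂ) * w ^ (n-k-1) * Complex.exp (c * w)
            + w ^ (n-k) * (c * Complex.exp (c * w)))
        = ((m.choose k : ℂ) * (n.descFactorial (k+1) : ℂ) * w ^ (n-(k+1)) * c ^ (m-k)
            * Complex.exp (c * w))
          + ((m.choose k : ℂ) * (n.descFactorial k : ℂ) * w ^ (n-k) * c ^ ((m-k)+1)
            * Complex.exp (c * w)) := by
      intro k _
      rw [Nat.descFactorial_succ, ← Nat.sub_sub]
      push_cast
      ring
    rw [Finset.sum_congr rfl hsplit, Finset.sum_add_distrib]
    have hB : (∑ k ∈ range (m+1), ((m.choose k : ℂ) * (n.descFactorial k : ℂ) * w ^ (n-k)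
          * c ^ ((m-k)+1) * Complex.exp (c * w)))
        = ∑ k ∈ range (m+1), ((m.choose k : ℂ) * (n.descFactorial k : ℂ) * w ^ (n-k)
          * c ^ (m+1-k) * Complex.exp (c * w)) := by
      refine Finset.sum_congr rfl fun k hk => ?_
      have hk' : k ≤ m := by simpa [Nat.lt_succ_iff] using hk
      rw [show (m-k)+1 = m+1-k by omega]
    have hA : ∀ k ∈ range (m+1),
        ((m.choose k : ℂ) * (n.descFactorial (k+1) : ℂ) * w ^ (n-(k+1)) * c ^ (m-k)
          * Complex.exp (c * w))
        = (((m+1).choose (k+1) : ℂ) * (n.descFactorial (k+1) : ℂ) * w ^ (n-(k+1))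
            * c ^ ((m+1)-(k+1)) * Complex.exp (c * w))
          - ((m.choose (k+1) : ℂ) * (n.descFactorial (k+1) : ℂ) * w ^ (n-(k+1))
            * c ^ ((m+1)-(k+1)) * Complex.exp (c * w)) := by
      intro k _
      rw [Nat.choose_succ_succ, Nat.succ_sub_succ]
      push_cast
      ring
    rw [Finset.sum_congr rfl hA, hB, Finset.sum_sub_distrib]
    rw [Finset.sum_range_succ'
      (fun j => ((m+1).choose j : ℂ) * (n.descFactorial j : ℂ) * w ^ (n-j)
        * c ^ ((m+1)-j) * Complex.exp (c * w)) (m+1)]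
    rw [Finset.sum_range_succ'
      (fun j => (m.choose j : ℂ) * (n.descFactorial j : ℂ) * w ^ (n-j)
        * c ^ (m+1-j) * Complex.exp (c * w)) m]
    simp only [Nat.choose_zero_right, Nat.descFactorial_zero, Nat.cast_one, one_mul,
      Nat.sub_zero]
    rw [Finset.sum_range_succ
      (fun j => (m.choose (j+1) : ℂ) * (n.descFactorial (j+1) : ℂ) * w ^ (n-(j+1))
        * c ^ ((m+1)-(j+1)) * Complex.exp (c * w)) m]
    simp [Nat.choose_succ_self]
    ring

-- I1 : the Leibniz/Vandermonde-type alternating sum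
lemma comb1 : ∀ m n b : ℕ, n ≤ m + b →
    (∑ k ∈ range (m+1), (-1:ℤ)^k * (m.choose k) * (n.descFactorial k) * ((m + b - k).factorial))
      = (n.factorial : ℤ) * ((m + b - n).factorial) * (b.choose n) := by
  intro m
  induction m with
  | zero =>
    intro n b hn
    simp only [zero_add, range_one, sum_singleton, pow_zero, Nat.choose_self,
      Nat.descFactorial_zero, Nat.cast_one, one_mul, mul_one, Nat.sub_zero]
    rw [← Nat.choose_mul_factorial_mul_factorial (show n ≤ b by omega)]
    push_cast
    ring
  | succ m ih =>
    intro n b hn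
    rw [Finset.sum_range_succ'
      (fun k => (-1:ℤ)^k * ((m+1).choose k) * (n.descFactorial k) * ((m + 1 + b - k).factorial))
      (m+1)]
    simp only [pow_zero, Nat.choose_zero_right, Nat.descFactorial_zero, Nat.cast_one, one_mul,
      mul_one, Nat.sub_zero]
    have hterm : ∀ k ∈ range (m+1),
        (-1:ℤ)^(k+1) * ((m+1).choose (k+1)) * (n.descFactorial (k+1))
          * ((m + 1 + b - (k+1)).factorial)
        = -((-1:ℤ)^k * (m.choose k) * (n.descFactorial (k+1)) * ((m + b - k).factorial))
          + ((-1:ℤ)^(k+1) * (m.choose (k+1)) * (n.descFactorial (k+1))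
            * ((m + 1 + b - (k+1)).factorial)) := by
      intro k hk
      rw [Nat.choose_succ_succ]
      rw [show m + 1 + b - (k+1) = m + b - k by omega]
      push_cast
      ring
    rw [Finset.sum_congr rfl hterm, Finset.sum_add_distrib]
    -- second piece + leading term:  equals  ∑_{k ∈ range (m+2)} over m.choose
    have hsecond : ((m+1+b).factorial : ℤ) + ∑ k ∈ range (m+1),
        ((-1:ℤ)^(k+1) * (m.choose (k+1)) * (n.descFactorial (k+1))
          * ((m + 1 + b - (k+1)).factorial))
        = ∑ k ∈ range (m+2),
          ((-1:ℤ)^k * (m.choose k) * (n.descFactorial k) * ((m + 1 + b - k).factorial)) := by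
      rw [Finset.sum_range_succ'
        (fun k => (-1:ℤ)^k * (m.choose k) * (n.descFactorial k) * ((m + 1 + b - k).factorial))
        (m+1)]
      simp only [pow_zero, Nat.choose_zero_right, Nat.descFactorial_zero, Nat.cast_one, one_mul,
        mul_one, Nat.sub_zero]
      ring
    have hsecond2 : ∑ k ∈ range (m+2),
        ((-1:ℤ)^k * (m.choose k) * (n.descFactorial k) * ((m + 1 + b - k).factorial))
        = (n.factorial : ℤ) * ((m + 1 + b - n).factorial) * ((b+1).choose n) := by
      rw [Finset.sum_range_succ, Nat.choose_succ_self]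
      have := ih n (b+1) (by omega)
      rw [show m + (b+1) = m + 1 + b by omega] at this
      rw [show m + 1 + b - (m+1) = b by omega]
      simp only [Nat.cast_zero, mul_zero, zero_mul, add_zero]
      exact this
    -- first piece: via descFactorial_succ
    have hfirst : ∑ k ∈ range (m+1),
        (-((-1:ℤ)^k * (m.choose k) * (n.descFactorial (k+1)) * ((m + b - k).factorial)))
        = -((n : ℤ) * ((n-1).factorial * ((m + b - (n-1)).factorial) * (b.choose (n-1)))) := by
      rcases Nat.eq_zero_or_pos n with hn0 | hn0
      · simp [hn0]
      · obtain ⟨n₀, rfl⟩ : ∃ n₀, n = n₀ + 1 := ⟨n - 1, by omega⟩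
        have : ∀ k ∈ range (m+1),
            (-((-1:ℤ)^k * (m.choose k) * ((n₀+1).descFactorial (k+1)) * ((m + b - k).factorial)))
            = -((n₀+1 : ℤ) * ((-1:ℤ)^k * (m.choose k) * (n₀.descFactorial k)
                * ((m + b - k).factorial))) := by
          intro k _
          rw [Nat.succ_descFactorial_succ]
          push_cast
          ring
        rw [Finset.sum_congr rfl this, Finset.sum_neg_distrib, ← Finset.mul_sum,
          ih n₀ b (by omega)]
        simp only [Nat.add_sub_cancel]
        push_cast
        ring
    rw [hfirst]
    have hstep := hsecond.trans hsecond2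
    have hfin : ((n.factorial : ℤ) * ((m + 1 + b - n).factorial) * ((b+1).choose n))
        - ((n : ℤ) * ((n-1).factorial * ((m + b - (n-1)).factorial) * (b.choose (n-1))))
        = (n.factorial : ℤ) * ((m + 1 + b - n).factorial) * (b.choose n) := by
      rcases Nat.eq_zero_or_pos n with hn0 | hn0
      · simp [hn0]
      · obtain ⟨n₀, rfl⟩ : ∃ n₀, n = n₀ + 1 := ⟨n - 1, by omega⟩
        rw [Nat.choose_succ_succ b n₀]
        simp only [Nat.add_sub_cancel]
        rw [show m + 1 + b - (n₀+1) = m + b - n₀ by omega, Nat.factorial_succ]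
        push_cast
        ring
    linear_combination hstep + hfin

lemma comb2 (m' n n' D l : ℕ) (hD : n' = n + D) (hl : l ≤ m') :
    D.factorial * (m'.choose l * n'.descFactorial l * (m'-l).factorial
        * (n.factorial * ((n'-l).choose n)))
      = m'.factorial * (n'.factorial * (D.choose l)) := by
  rw [Nat.descFactorial_eq_factorial_mul_choose]
  have h1 : m'.choose l * l.factorial * (m'-l).factorial = m'.factorial :=
    Nat.choose_mul_factorial_mul_factorial hl
  have h2 : D.factorial * (n.factorial * (n'.choose l * ((n'-l).choose n)))
      = n'.factorial * D.choose l := by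
    rcases le_or_gt l D with hlD | hlD
    · have e1 : n'.choose (n+l) * (n+l).choose l = n'.choose l * (n'-l).choose n := by
        have := Nat.choose_mul (n := n') (show l ≤ n + l by omega)
        simpa [Nat.add_sub_cancel_left, Nat.add_sub_cancel] using this
      have e2 : n'.choose (n+l) * (n+l).choose n = n'.choose n * (D.choose l) := by
        have := Nat.choose_mul (n := n') (show n ≤ n + l by omega)
        rw [this]
        congr 2 <;> omega
      have e3 : (n+l).choose l = (n+l).choose n := by
        rw [show n + l = l + n by omega]
        exact Nat.choose_symm_add
      have e4 : n'.choose n * n.factorial * D.factorial = n'.factorial := by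
        have := Nat.choose_mul_factorial_mul_factorial (show n ≤ n' by omega)
        rwa [show n' - n = D by omega] at this
      calc D.factorial * (n.factorial * (n'.choose l * ((n'-l).choose n)))
          = D.factorial * (n.factorial * (n'.choose (n+l) * (n+l).choose l)) := by rw [e1]
        _ = D.factorial * (n.factorial * (n'.choose (n+l) * (n+l).choose n)) := by rw [e3]
        _ = D.factorial * (n.factorial * (n'.choose n * (D.choose l))) := by rw [e2]
        _ = (n'.choose n * n.factorial * D.factorial) * D.choose l := by ring
        _ = n'.factorial * D.choose l := by rw [e4]
    · rw [Nat.choose_eq_zero_of_lt hlD]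
      rcases le_or_gt l n' with hln' | hln'
      · rw [Nat.choose_eq_zero_of_lt (show n' - l < n by omega)]
        simp
      · rw [Nat.choose_eq_zero_of_lt hln']
        simp
  calc D.factorial * (m'.choose l * (l.factorial * n'.choose l) * (m'-l).factorial
        * (n.factorial * ((n'-l).choose n)))
      = (m'.choose l * l.factorial * (m'-l).factorial) *
          (D.factorial * (n.factorial * (n'.choose l * ((n'-l).choose n)))) := by ring
    _ = m'.factorial * (n'.factorial * (D.choose l)) := by rw [h1, h2]

lemma comb3 (m n m' n' : ℕ) (hbal : m + n' = n + m') (hnn : n ≤ n') :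
    (∑ l ∈ range (m'+1), ∑ k ∈ range (m+1),
      (-1:ℤ)^(k+l) * (m.choose k) * (n.descFactorial k) * ((m'.choose l) * (n'.descFactorial l))
        * (((m-k) + (n'-l)).factorial))
    = if m = m' ∧ n = n' then (m.factorial : ℤ) * n.factorial else 0 := by
  obtain ⟨D, hD⟩ : ∃ D, n' = n + D := ⟨n' - n, by omega⟩
  have hm' : m' = m + D := by omega
  have hl_eval : ∀ l ∈ range (m'+1),
      (∑ k ∈ range (m+1),
        (-1:ℤ)^(k+l) * (m.choose k) * (n.descFactorial k)
          * ((m'.choose l) * (n'.descFactorial l)) * (((m-k) + (n'-l)).factorial))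
      = (-1:ℤ)^l * ((m'.choose l) * (n'.descFactorial l)) *
          ((n.factorial : ℤ) * ((m'-l).factorial) * ((n'-l).choose n)) := by
    intro l hl
    have hlm' : l ≤ m' := by simpa [Nat.lt_succ_iff] using hl
    rcases le_or_gt l n' with hln' | hln'
    · have hfac : ∀ k ∈ range (m+1),
          (-1:ℤ)^(k+l) * (m.choose k) * (n.descFactorial k)
            * ((m'.choose l) * (n'.descFactorial l)) * (((m-k) + (n'-l)).factorial)
          = ((-1:ℤ)^l * ((m'.choose l) * (n'.descFactorial l))) *
              ((-1:ℤ)^k * (m.choose k) * (n.descFactorial k)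
                * ((m + (n'-l) - k).factorial)) := by
        intro k hk
        have hkm : k ≤ m := by simpa [Nat.lt_succ_iff] using hk
        rw [show (m-k) + (n'-l) = m + (n'-l) - k by omega, pow_add]
        ring
      rw [Finset.sum_congr rfl hfac, ← Finset.mul_sum,
        comb1 m n (n'-l) (by omega)]
      rw [show m + (n'-l) - n = m' - l by omega]
    · have : n'.descFactorial l = 0 := Nat.descFactorial_eq_zero_iff_lt.2 hln'
      rw [this]
      simp
  rw [Finset.sum_congr rfl hl_eval]
  -- multiply by D! and use comb2
  have hmul : (D.factorial : ℤ) * (∑ l ∈ range (m'+1),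
      (-1:ℤ)^l * ((m'.choose l) * (n'.descFactorial l)) *
          ((n.factorial : ℤ) * ((m'-l).factorial) * ((n'-l).choose n)))
      = (m'.factorial : ℤ) * (n'.factorial) * (if D = 0 then 1 else 0) := by
    rw [Finset.mul_sum]
    have : ∀ l ∈ range (m'+1),
        (D.factorial : ℤ) * ((-1:ℤ)^l * ((m'.choose l) * (n'.descFactorial l)) *
          ((n.factorial : ℤ) * ((m'-l).factorial) * ((n'-l).choose n)))
        = ((m'.factorial : ℤ) * (n'.factorial)) * ((-1:ℤ)^l * (D.choose l)) := by
      intro l hl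
      have hlm' : l ≤ m' := by simpa [Nat.lt_succ_iff] using hl
      have h := comb2 m' n n' D l hD hlm'
      have hcast : (D.factorial : ℤ) * (m'.choose l * n'.descFactorial l * (m'-l).factorial
          * (n.factorial * ((n'-l).choose n)))
          = (m'.factorial : ℤ) * (n'.factorial * (D.choose l)) := by exact_mod_cast h
      calc (D.factorial : ℤ) * ((-1:ℤ)^l * ((m'.choose l) * (n'.descFactorial l)) *
            ((n.factorial : ℤ) * ((m'-l).factorial) * ((n'-l).choose n)))
          = (-1:ℤ)^l * ((D.factorial : ℤ) * (m'.choose l * n'.descFactorial l * (m'-l).factorial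
              * (n.factorial * ((n'-l).choose n)))) := by push_cast; ring
        _ = (-1:ℤ)^l * ((m'.factorial : ℤ) * (n'.factorial * (D.choose l))) := by rw [hcast]
        _ = ((m'.factorial : ℤ) * (n'.factorial)) * ((-1:ℤ)^l * (D.choose l)) := by ring
    rw [Finset.sum_congr rfl this, ← Finset.mul_sum]
    congr 1
    have hsub : ∑ l ∈ range (m'+1), (-1:ℤ)^l * (D.choose l)
        = ∑ l ∈ range (D+1), (-1:ℤ)^l * (D.choose l) := by
      symm
      apply Finset.sum_subset
      · exact Finset.range_subset_range.2 (by omega)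
      · intro x _ hx
        have : D < x := by simpa [Nat.lt_succ_iff] using hx
        rw [Nat.choose_eq_zero_of_lt this]
        simp
    rw [hsub, Int.alternating_sum_range_choose]
  rcases Nat.eq_zero_or_pos D with hD0 | hD0
  · have hmm : m = m' ∧ n = n' := by omega
    rw [if_pos hmm]
    rw [hD0] at hmul
    norm_num at hmul
    rw [hmul, hmm.1, hmm.2]
  · rw [if_neg (by omega)]
    have hfac : (D.factorial : ℤ) ≠ 0 := by
      exact_mod_cast D.factorial_ne_zero
    rw [if_neg (by omega), mul_zero] at hmul
    exact (mul_eq_zero.1 hmul).resolve_left hfac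

lemma complexHermite_eq (ν : ℝ) (m n : ℕ) (z w : ℂ) :
    complexHermite ν m n z w = ∑ k ∈ range (m+1),
      (((-1:ℝ)^k * ν^(m+n-k) * (m.choose k) * (n.descFactorial k) : ℝ) : ℂ)
        * z^(m-k) * w^(n-k) := by
  have h1 : (fun w' => iteratedDeriv n (fun z' => Complex.exp (-(ν : ℂ) * z' * w')) z)
      = fun w' => (-(ν:ℂ))^n * (w' ^ n * Complex.exp ((-(ν:ℂ) * z) * w')) := by
    funext w'
    have : (fun z' => Complex.exp (-(ν : ℂ) * z' * w'))
        = fun z' => Complex.exp ((-(ν:ℂ) * w') * z') := by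
      funext z'; ring_nf
    rw [this, iteratedDeriv_cexp_mul]
    rw [mul_pow]
    ring_nf
  rw [complexHermite, h1]
  have h2 : iteratedDeriv m
      (fun w' => (-(ν:ℂ))^n * (w' ^ n * Complex.exp ((-(ν:ℂ) * z) * w'))) w
      = (-(ν:ℂ))^n * iteratedDeriv m
        (fun w' => w' ^ n * Complex.exp ((-(ν:ℂ) * z) * w')) w := by
    rw [← iteratedDerivWithin_univ, ← iteratedDerivWithin_univ]
    exact iteratedDerivWithin_const_mul (Set.mem_univ w) uniqueDiffOn_univ _
      (((contDiff_id.pow n).mul ((contDiff_const.mul contDiff_id).cexp)).contDiffWithinAt)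
  rw [h2, iteratedDeriv_pow_mul_cexp]
  rw [Finset.mul_sum, Finset.mul_sum]
  refine Finset.sum_congr rfl fun k hk => ?_
  have hk' : k ≤ m := by simpa [Nat.lt_succ_iff] using hk
  have hexp : Complex.exp ((ν : ℂ) * z * w) * Complex.exp ((-(ν:ℂ) * z) * w) = 1 := by
    rw [← Complex.exp_add]
    ring_nf
    exact Complex.exp_zero
  have hpow : (-(ν:ℂ) * z) ^ (m - k) = (-(ν:ℂ))^(m-k) * z^(m-k) := by rw [mul_pow]
  have hν1 : ((-1:ℂ))^(m+n) * (-(ν:ℂ))^n * (-(ν:ℂ))^(m-k)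
      = (-1:ℂ)^k * (ν:ℂ)^(m+n-k) := by
    rw [neg_pow (ν:ℂ) n, neg_pow (ν:ℂ) (m-k)]
    have : ((-1:ℂ))^(m+n) * ((-1:ℂ)^n * (ν:ℂ)^n) * ((-1:ℂ)^(m-k) * (ν:ℂ)^(m-k))
        = ((-1:ℂ))^((m+n)+n+(m-k)) * ((ν:ℂ)^(n+(m-k))) := by
      rw [pow_add, pow_add, pow_add]; ring
    rw [this, show n+(m-k) = m+n-k by omega]
    congr 1
    have heven : ((-1:ℂ))^((m+n)+n+(m-k)+k) = 1 :=
      Even.neg_one_pow ⟨m+n, by omega⟩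
    calc ((-1:ℂ))^((m+n)+n+(m-k)) = ((-1:ℂ))^((m+n)+n+(m-k)) * ((-1:ℂ)^k * (-1:ℂ)^k) := by
          rw [← pow_add]
          simp [Even.neg_one_pow ⟨k, rfl⟩]
      _ = ((-1:ℂ))^((m+n)+n+(m-k)+k) * (-1:ℂ)^k := by rw [pow_add]; ring
      _ = (-1:ℂ)^k := by rw [heven, one_mul]
  push_cast
  calc (-1:ℂ)^(m+n) * Complex.exp ((ν:ℂ)*z*w) * ((-(ν:ℂ))^n *
        ((m.choose k : ℂ) * (n.descFactorial k : ℂ) * w ^ (n-k) * (-(ν:ℂ)*z) ^ (m-k)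
          * Complex.exp ((-(ν:ℂ)*z) * w)))
      = ((-1:ℂ)^(m+n) * (-(ν:ℂ))^n * (-(ν:ℂ))^(m-k)) * (m.choose k : ℂ)
          * (n.descFactorial k : ℂ) * z^(m-k) * w^(n-k)
          * (Complex.exp ((ν:ℂ)*z*w) * Complex.exp ((-(ν:ℂ)*z) * w)) := by
        rw [hpow]; ring
    _ = (-1:ℂ)^k * (ν:ℂ)^(m+n-k) * (m.choose k : ℂ) * (n.descFactorial k : ℂ)
          * z^(m-k) * w^(n-k) := by rw [hν1, hexp, mul_one]
    _ = _ := by push_cast; ring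

lemma polar_integrand (ν : ℝ) (a b : ℕ) (p : ℝ × ℝ) (hp : p ∈ polarCoord.target) :
    p.1 • ((Complex.polarCoord.symm p)^a * (starRingEnd ℂ (Complex.polarCoord.symm p))^b
        * Complex.exp (-(ν:ℂ) * Complex.normSq (Complex.polarCoord.symm p)))
    = ((p.1 ^ (a+b+1) * Real.exp (-ν * p.1^2) : ℝ) : ℂ)
        * Complex.exp (((a:ℂ) - (b:ℂ)) * p.2 * Complex.I) := by
  obtain ⟨r, θ⟩ := p
  dsimp only
  rw [polarCoord_target] at hp
  have hr : 0 < r := hp.1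
  have hz : Complex.polarCoord.symm (r, θ) = (r:ℂ) * Complex.exp (θ * Complex.I) := by
    rw [Complex.polarCoord_symm_apply, Complex.exp_mul_I]
    push_cast
    rfl
  have habs : ‖Complex.polarCoord.symm (r, θ)‖ = r := by
    rw [hz, norm_mul, Complex.norm_exp_ofReal_mul_I, Complex.norm_real, Real.norm_eq_abs, abs_of_pos hr, mul_one]
  have hnormSq : (Complex.normSq (Complex.polarCoord.symm (r, θ)) : ℂ) = ((r:ℝ)^2 : ℝ) := by
    rw [← Complex.sq_norm, habs]
  have hconj : (starRingEnd ℂ) (Complex.polarCoord.symm (r, θ))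
      = (r:ℂ) * Complex.exp (-(θ * Complex.I)) := by
    rw [hz, map_mul, Complex.conj_ofReal, ← Complex.exp_conj, map_mul, Complex.conj_I,
      Complex.conj_ofReal, mul_neg]
  rw [hconj, hnormSq, hz]
  rw [mul_pow, mul_pow, ← Complex.exp_nat_mul, ← Complex.exp_nat_mul]
  have hexp : -(ν:ℂ) * ((r:ℝ)^2 : ℝ) = ((-ν * r^2 : ℝ) : ℂ) := by push_cast; ring
  rw [hexp, ← Complex.ofReal_exp (-ν * r^2)]
  have : Complex.exp ((a:ℂ) * (θ * Complex.I)) * Complex.exp ((b:ℂ) * -(θ * Complex.I))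
      = Complex.exp (((a:ℂ) - (b:ℂ)) * θ * Complex.I) := by
    rw [← Complex.exp_add]; ring_nf
  calc (r : ℝ) • ((r:ℂ)^a * Complex.exp ((a:ℂ) * (θ * Complex.I)) *
          ((r:ℂ)^b * Complex.exp ((b:ℂ) * -(θ * Complex.I)))
          * ((Real.exp (-ν * r^2) : ℝ) : ℂ))
      = ((r:ℂ) * ((r:ℂ)^a * (r:ℂ)^b) * ((Real.exp (-ν * r^2) : ℝ) : ℂ))
          * (Complex.exp ((a:ℂ) * (θ * Complex.I)) * Complex.exp ((b:ℂ) * -(θ * Complex.I))) := by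
        rw [Complex.real_smul]; ring
    _ = _ := by
        rw [this]
        congr 1
        push_cast
        ring

lemma integral_monomial (ν : ℝ) (hν : 0 < ν) (a b : ℕ) :
    ∫ z : ℂ, z^a * (starRingEnd ℂ z)^b * Complex.exp (-(ν:ℂ) * Complex.normSq z)
      = if a = b then ((Real.pi * a.factorial / ν^(a+1) : ℝ) : ℂ) else 0 := by
  rw [← Complex.integral_comp_polarCoord_symm]
  rw [setIntegral_congr_fun (by exact (measurableSet_Ioi.prod measurableSet_Ioo))
    (fun p hp => polar_integrand ν a b p hp)]
  rw [show polarCoord.target = Set.Ioi (0:ℝ) ×ˢ Set.Ioo (-π) π from rfl,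
    Measure.volume_eq_prod, setIntegral_prod_mul
      (f := fun r : ℝ => ((r ^ (a+b+1) * rexp (-ν * r^2) : ℝ) : ℂ))
      (g := fun θ : ℝ => Complex.exp (((a:ℂ) - (b:ℂ)) * θ * Complex.I))]
  have hreal : (∫ r in Ioi (0:ℝ), r ^ (a+b+1) * Real.exp (-ν * r^2))
      = (((ν^((a+b+2)/2 : ℝ) : ℝ))⁻¹ * (1/2) * Real.Gamma ((a+b+2)/2 : ℝ) : ℝ) := by
    have : ∀ r ∈ Ioi (0:ℝ), r ^ (a+b+1) * Real.exp (-ν * r^2)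
        = r ^ ((a+b+1 : ℕ) : ℝ) * Real.exp (-ν * r ^ (2:ℝ)) := by
      intro r hr
      rw [Real.rpow_natCast, Real.rpow_two]
    rw [setIntegral_congr_fun measurableSet_Ioi this,
      integral_rpow_mul_exp_neg_mul_rpow two_pos
        (lt_of_lt_of_le (by norm_num) (Nat.cast_nonneg _)) hν]
    rw [neg_div, Real.rpow_neg hν.le]
    push_cast
    ring_nf
  have hradial : (∫ r in Ioi (0:ℝ), ((r ^ (a+b+1) * Real.exp (-ν * r^2) : ℝ) : ℂ))
      = (((ν^((a+b+2)/2 : ℝ) : ℝ))⁻¹ * (1/2) * Real.Gamma ((a+b+2)/2 : ℝ) : ℝ) := by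
    rw [← hreal]
    exact integral_ofReal
  rcases eq_or_ne a b with rfl | hab
  · rw [if_pos rfl]
    have hang : (∫ θ in Ioo (-π) π, Complex.exp (((a:ℂ) - (a:ℂ)) * θ * Complex.I))
        = ((2 * π : ℝ) : ℂ) := by
      simp only [sub_self, zero_mul, Complex.exp_zero]
      rw [setIntegral_const, Real.volume_real_Ioo_of_le (by linarith [Real.pi_pos])]
      rw [Complex.real_smul, mul_one]
      push_cast
      ring
    rw [hang, hradial]
    rw [show (((a:ℝ)+(a:ℝ)+2)/2 : ℝ) = ((a:ℝ) + 1) by ring]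
    rw [Real.Gamma_nat_eq_factorial]
    rw [show ((a:ℝ) + 1) = ((a+1 : ℕ) : ℝ) by push_cast; ring]
    rw [Real.rpow_natCast]
    rw [← Complex.ofReal_mul]
    congr 1
    field_simp
  · rw [if_neg hab]
    have hang : (∫ θ in Ioo (-π) π, Complex.exp (((a:ℂ) - (b:ℂ)) * θ * Complex.I)) = 0 := by
      have hswap : ∀ θ : ℝ, Complex.exp (((a:ℂ) - (b:ℂ)) * θ * Complex.I)
          = Complex.exp ((((a:ℂ) - (b:ℂ)) * Complex.I) * θ) := by
        intro θ; ring_nf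
      simp_rw [hswap]
      rw [← integral_Ioc_eq_integral_Ioo, ← intervalIntegral.integral_of_le (by linarith [Real.pi_pos] : -π ≤ π)]
      rw [integral_exp_mul_complex (by
        simp only [ne_eq, mul_eq_zero, Complex.I_ne_zero, or_false, sub_eq_zero]
        exact_mod_cast hab)]
      have : (((a:ℂ) - (b:ℂ)) * Complex.I) * (π:ℂ)
          = (((a:ℂ) - (b:ℂ)) * Complex.I) * ((-π : ℝ):ℂ)
            + (((a:ℤ) - (b:ℤ) : ℤ) : ℂ) * (2*(π:ℂ)*Complex.I) := by
        push_cast; ring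
      rw [this, Complex.exp_add, Complex.exp_int_mul_two_pi_mul_I, mul_one, sub_self, zero_div]
    rw [hang, mul_zero]

lemma gauss_dom (ν : ℝ) (hν : 0 < ν) (K : ℕ) : ∀ x : ℝ, 0 ≤ x →
    x^K * Real.exp (-ν * x^2) ≤ (1 + (K.factorial : ℝ) * (2/ν)^K) * Real.exp (-(ν/2) * x^2) := by
  intro x hx
  set C : ℝ := 1 + (K.factorial : ℝ) * (2/ν)^K with hC
  have hsplit : Real.exp (-ν * x^2) = Real.exp (-(ν/2) * x^2) * Real.exp (-(ν/2) * x^2) := by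
    rw [← Real.exp_add]; ring_nf
  have hmain : x^K * Real.exp (-(ν/2) * x^2) ≤ C := by
    rcases le_or_gt x 1 with hx1 | hx1
    · have h1 : x^K ≤ 1 := pow_le_one₀ hx hx1
      have h2 : Real.exp (-(ν/2) * x^2) ≤ 1 := Real.exp_le_one_iff.2 (by nlinarith)
      have h3 : (0:ℝ) ≤ (K.factorial : ℝ) * (2/ν)^K := by positivity
      nlinarith [Real.exp_pos (-(ν/2) * x^2)]
    · have hfac := Real.pow_div_factorial_le_exp (x := ν/2 * x^2) (by positivity) K
      have hxK : x^K ≤ (x^2)^K := by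
        rw [← pow_mul]
        exact pow_le_pow_right₀ hx1.le (by omega)
      have hid : (x^2)^K = (2/ν)^K * (ν/2 * x^2)^K := by
        have h5 : (2/ν) * (ν/2) = 1 := by field_simp
        calc (x^2)^K = ((2/ν)*(ν/2))^K * (x^2)^K := by rw [h5, one_pow, one_mul]
          _ = (2/ν)^K * (ν/2 * x^2)^K := by rw [mul_pow, mul_pow]; ring
      have hexp2 : Real.exp (ν/2 * x^2) * Real.exp (-(ν/2) * x^2) = 1 := by
        rw [← Real.exp_add]; ring_nf; exact Real.exp_zero
      have hKf : (K.factorial:ℝ) ≠ 0 := Nat.cast_ne_zero.2 K.factorial_ne_zero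
      calc x^K * Real.exp (-(ν/2) * x^2) ≤ (x^2)^K * Real.exp (-(ν/2)*x^2) :=
          mul_le_mul_of_nonneg_right hxK (Real.exp_nonneg _)
        _ = (2/ν)^K * ((ν/2 * x^2)^K / K.factorial) * K.factorial
              * Real.exp (-(ν/2)*x^2) := by
            rw [hid]; field_simp
        _ ≤ (2/ν)^K * Real.exp (ν/2*x^2) * K.factorial * Real.exp (-(ν/2)*x^2) := by
            have h4 : (0:ℝ) ≤ (2/ν)^K := by positivity
            gcongr
        _ = (K.factorial : ℝ) * (2/ν)^K * (Real.exp (ν/2*x^2) * Real.exp (-(ν/2)*x^2)) := by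
            ring
        _ = (K.factorial : ℝ) * (2/ν)^K := by rw [hexp2, mul_one]
        _ ≤ C := by rw [hC]; linarith
  calc x^K * Real.exp (-ν*x^2) = (x^K * Real.exp (-(ν/2)*x^2)) * Real.exp (-(ν/2)*x^2) := by
        rw [hsplit]; ring
    _ ≤ C * Real.exp (-(ν/2)*x^2) := mul_le_mul_of_nonneg_right hmain (Real.exp_nonneg _)

lemma integrable_monomial (ν : ℝ) (hν : 0 < ν) (a b : ℕ) :
    Integrable (fun z : ℂ => z^a * (starRingEnd ℂ z)^b
      * Complex.exp (-(ν:ℂ) * Complex.normSq z)) := by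
  set K := a + b with hK
  set C : ℝ := 1 + (K.factorial : ℝ) * (2/ν)^K with hC
  have hg0 : Integrable (fun v : ℂ ↦ Complex.exp (-((ν/2 : ℝ):ℂ) * ‖v‖^2)) := by
    simpa using GaussianFourier.integrable_cexp_neg_mul_sq_norm_add (V := ℂ)
      (b := ((ν/2:ℝ):ℂ)) (by simpa using half_pos hν) 0 0
  have hg1 : Integrable (fun v : ℂ ↦ Real.exp (-(ν/2) * ‖v‖^2)) := by
    have h := hg0.norm
    refine h.congr (Filter.Eventually.of_forall fun v => ?_)
    dsimp only
    rw [Complex.norm_exp]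
    congr 1
    have h2 : -((ν/2 : ℝ):ℂ) * (‖v‖:ℂ)^2 = ((-(ν/2) * ‖v‖^2 : ℝ) : ℂ) := by push_cast; ring
    rw [h2, Complex.ofReal_re]
  have hg : Integrable (fun v : ℂ ↦ C * Real.exp (-(ν/2) * ‖v‖^2)) := hg1.const_mul C
  refine Integrable.mono' hg ?_ (Filter.Eventually.of_forall fun z => ?_)
  · apply Continuous.aestronglyMeasurable
    refine Continuous.mul (Continuous.mul (continuous_pow a)
      ((Complex.continuous_conj).pow b)) ?_
    exact Complex.continuous_exp.comp
      (continuous_const.mul (Complex.continuous_ofReal.comp Complex.continuous_normSq))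
  · have hnorm : ‖z^a * (starRingEnd ℂ z)^b * Complex.exp (-(ν:ℂ) * Complex.normSq z)‖
        = ‖z‖^K * Real.exp (-ν * ‖z‖^2) := by
      rw [norm_mul, norm_mul, norm_pow, norm_pow, RCLike.norm_conj]
      rw [Complex.norm_exp]
      have h1 : -(ν:ℂ) * (Complex.normSq z : ℂ) = ((-ν * ‖z‖^2 : ℝ) : ℂ) := by
        rw [Complex.normSq_eq_norm_sq]
        push_cast; ring
      rw [h1, Complex.ofReal_re, hK, pow_add]
    rw [hnorm]
    exact gauss_dom ν hν K ‖z‖ (norm_nonneg z)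


lemma key_lemma (ν : ℝ) (hν : 0 < ν) (m n m' n' : ℕ) (hw : m + n' = n + m' → n ≤ n') :
    ∫ z : ℂ, complexHermite ν m n z (starRingEnd ℂ z)
        * starRingEnd ℂ (complexHermite ν m' n' z (starRingEnd ℂ z))
        * Complex.exp (-(ν:ℂ) * Complex.normSq z)
    = if m = m' ∧ n = n' then ((Real.pi / ν * m.factorial * n.factorial * ν^(m+n) : ℝ) : ℂ)
      else 0 := by
  have hpt : ∀ z : ℂ,
      complexHermite ν m n z (starRingEnd ℂ z)
        * starRingEnd ℂ (complexHermite ν m' n' z (starRingEnd ℂ z))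
        * Complex.exp (-(ν:ℂ) * Complex.normSq z)
      = ∑ l ∈ range (m'+1), ∑ k ∈ range (m+1),
          (((((-1:ℝ)^k * ν^(m+n-k) * (m.choose k) * (n.descFactorial k))
            * ((-1:ℝ)^l * ν^(m'+n'-l) * (m'.choose l) * (n'.descFactorial l)) : ℝ)) : ℂ)
          * (z ^ ((m-k) + (n'-l)) * (starRingEnd ℂ z) ^ ((n-k) + (m'-l))
              * Complex.exp (-(ν:ℂ) * Complex.normSq z)) := by
    intro z
    rw [complexHermite_eq, complexHermite_eq]
    simp only [map_sum, map_mul, map_pow, Complex.conj_conj, Complex.conj_ofReal]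
    rw [Finset.sum_mul_sum]
    simp only [Finset.sum_mul]
    rw [Finset.sum_comm]
    refine Finset.sum_congr rfl fun l _ => ?_
    refine Finset.sum_congr rfl fun k _ => ?_
    rw [pow_add z, pow_add (starRingEnd ℂ z)]
    push_cast
    ring
  have h1 : (∫ z : ℂ, complexHermite ν m n z (starRingEnd ℂ z)
        * starRingEnd ℂ (complexHermite ν m' n' z (starRingEnd ℂ z))
        * Complex.exp (-(ν:ℂ) * Complex.normSq z))
      = ∑ l ∈ range (m'+1), ∑ k ∈ range (m+1),
          (((((-1:ℝ)^k * ν^(m+n-k) * (m.choose k) * (n.descFactorial k))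
            * ((-1:ℝ)^l * ν^(m'+n'-l) * (m'.choose l) * (n'.descFactorial l)) : ℝ)) : ℂ)
          * ∫ z : ℂ, z ^ ((m-k) + (n'-l)) * (starRingEnd ℂ z) ^ ((n-k) + (m'-l))
              * Complex.exp (-(ν:ℂ) * Complex.normSq z) := by
    rw [integral_congr_ae (Filter.Eventually.of_forall hpt)]
    rw [integral_finset_sum _ (fun l _ => integrable_finset_sum _
      (fun k _ => (integrable_monomial ν hν _ _).const_mul _))]
    refine Finset.sum_congr rfl fun l _ => ?_
    rw [integral_finset_sum _ (fun k _ => (integrable_monomial ν hν _ _).const_mul _)]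
    refine Finset.sum_congr rfl fun k _ => ?_
    rw [integral_const_mul]
  rw [h1]
  simp only [integral_monomial ν hν]
  have hreal : (∑ l ∈ range (m'+1), ∑ k ∈ range (m+1),
      (((-1:ℝ)^k * ν^(m+n-k) * (m.choose k) * (n.descFactorial k))
        * ((-1:ℝ)^l * ν^(m'+n'-l) * (m'.choose l) * (n'.descFactorial l)))
      * (if (m-k)+(n'-l) = (n-k)+(m'-l)
          then π * ((((m-k)+(n'-l)).factorial) : ℝ) / ν^((m-k)+(n'-l)+1) else 0))
    = if m = m' ∧ n = n' then π / ν * m.factorial * n.factorial * ν^(m+n) else 0 := by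
    by_cases hbal : m + n' = n + m'
    · have hnn := hw hbal
      have hterm : ∀ l ∈ range (m'+1), ∀ k ∈ range (m+1),
          (((-1:ℝ)^k * ν^(m+n-k) * (m.choose k) * (n.descFactorial k))
            * ((-1:ℝ)^l * ν^(m'+n'-l) * (m'.choose l) * (n'.descFactorial l)))
          * (if (m-k)+(n'-l) = (n-k)+(m'-l)
              then π * ((((m-k)+(n'-l)).factorial) : ℝ) / ν^((m-k)+(n'-l)+1) else 0)
          = π / ν * ν^(n+m') *
            (((-1:ℤ)^(k+l) * (m.choose k) * (n.descFactorial k)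
              * ((m'.choose l) * (n'.descFactorial l))
              * (((m-k) + (n'-l)).factorial) : ℤ) : ℝ) := by
        intro l hl k hk
        have hkm : k ≤ m := by simpa [Nat.lt_succ_iff] using hk
        have hlm : l ≤ m' := by simpa [Nat.lt_succ_iff] using hl
        rcases Nat.lt_or_ge n k with h | h
        · rw [Nat.descFactorial_eq_zero_iff_lt.2 h]
          push_cast
          ring
        rcases Nat.lt_or_ge n' l with h' | h'
        · rw [Nat.descFactorial_eq_zero_iff_lt.2 h']
          push_cast
          ring
        rw [if_pos (by omega : (m-k)+(n'-l) = (n-k)+(m'-l))]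
        have hpow2 : ν^(m+n-k) * ν^(m'+n'-l) * (ν^((m-k)+(n'-l)+1))⁻¹
            = ν^(n+m') * ν⁻¹ := by
          have hpow : ν^(m+n-k) * ν^(m'+n'-l) * ν = ν^((m-k)+(n'-l)+1) * ν^(n+m') := by
            calc ν^(m+n-k) * ν^(m'+n'-l) * ν = ν^((m+n-k)+(m'+n'-l)+1) := by
                  rw [← pow_add, ← pow_succ]
              _ = ν^(((m-k)+(n'-l)+1)+(n+m')) := by congr 1; omega
              _ = ν^((m-k)+(n'-l)+1) * ν^(n+m') := by rw [pow_add]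
          have hne : ν ≠ 0 := hν.ne'
          field_simp
          linear_combination hpow
        push_cast
        rw [div_eq_mul_inv, div_eq_mul_inv]
        linear_combination ((-1:ℝ)^k * (m.choose k : ℝ) * (n.descFactorial k : ℝ)
          * (-1:ℝ)^l * (m'.choose l : ℝ) * (n'.descFactorial l : ℝ) * π
          * ((((m-k) + (n'-l)).factorial : ℝ))) * hpow2
      rw [Finset.sum_congr rfl (fun l hl => Finset.sum_congr rfl (fun k hk => hterm l hl k hk))]
      simp_rw [← Finset.mul_sum]
      rw [show (∑ l ∈ range (m'+1), ∑ k ∈ range (m+1),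
          (((-1:ℤ)^(k+l) * (m.choose k) * (n.descFactorial k)
            * ((m'.choose l) * (n'.descFactorial l))
            * (((m-k) + (n'-l)).factorial) : ℤ) : ℝ))
        = ((∑ l ∈ range (m'+1), ∑ k ∈ range (m+1),
          ((-1:ℤ)^(k+l) * (m.choose k) * (n.descFactorial k)
            * ((m'.choose l) * (n'.descFactorial l))
            * (((m-k) + (n'-l)).factorial)) : ℤ) : ℝ) by push_cast; rfl]
      rw [comb3 m n m' n' hbal hnn]
      by_cases hdiag : m = m' ∧ n = n'
      · rw [if_pos hdiag, if_pos hdiag]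
        obtain ⟨h1', h2'⟩ := hdiag
        subst h1'; subst h2'
        rw [show n + m = m + n by omega]
        push_cast
        ring
      · rw [if_neg hdiag, if_neg hdiag]
        simp
    · rw [if_neg (fun h => hbal (by omega))]
      refine Finset.sum_eq_zero fun l hl => Finset.sum_eq_zero fun k hk => ?_
      have hkm : k ≤ m := by simpa [Nat.lt_succ_iff] using hk
      have hlm : l ≤ m' := by simpa [Nat.lt_succ_iff] using hl
      rcases Nat.lt_or_ge n k with h | h
      · rw [Nat.descFactorial_eq_zero_iff_lt.2 h]; push_cast; ring
      rcases Nat.lt_or_ge n' l with h' | h'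
      · rw [Nat.descFactorial_eq_zero_iff_lt.2 h']; push_cast; ring
      rw [if_neg (by omega : ¬ ((m-k)+(n'-l) = (n-k)+(m'-l))), mul_zero]
  calc (∑ l ∈ range (m'+1), ∑ k ∈ range (m+1),
        (((((-1:ℝ)^k * ν^(m+n-k) * (m.choose k) * (n.descFactorial k))
          * ((-1:ℝ)^l * ν^(m'+n'-l) * (m'.choose l) * (n'.descFactorial l)) : ℝ)) : ℂ)
        * (if (m-k)+(n'-l) = (n-k)+(m'-l)
            then ((π * ((((m-k)+(n'-l)).factorial) : ℝ) / ν^((m-k)+(n'-l)+1) : ℝ) : ℂ) else 0))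
      = ((∑ l ∈ range (m'+1), ∑ k ∈ range (m+1),
          (((-1:ℝ)^k * ν^(m+n-k) * (m.choose k) * (n.descFactorial k))
            * ((-1:ℝ)^l * ν^(m'+n'-l) * (m'.choose l) * (n'.descFactorial l)))
          * (if (m-k)+(n'-l) = (n-k)+(m'-l)
              then π * ((((m-k)+(n'-l)).factorial) : ℝ) / ν^((m-k)+(n'-l)+1) else 0) : ℝ) : ℂ) := by
        push_cast [apply_ite (Complex.ofReal)]
        rfl
    _ = _ := by
        rw [hreal, apply_ite (Complex.ofReal), Complex.ofReal_zero]

theorem complexHermite_orthogonality (ν : ℝ) (hν : 0 < ν) (m n : ℕ) :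
    (∫ z : ℂ, ‖complexHermite ν m n z (starRingEnd ℂ z)‖^2
        * Real.exp (-ν * Complex.normSq z)
      = (Real.pi / ν) * (m.factorial : ℝ) * (n.factorial : ℝ) * ν^(m+n))
    ∧ ∀ m' n' : ℕ, (m, n) ≠ (m', n') →
      ∫ z : ℂ, complexHermite ν m n z (starRingEnd ℂ z)
          * starRingEnd ℂ (complexHermite ν m' n' z (starRingEnd ℂ z))
          * Complex.exp (-(ν : ℂ) * Complex.normSq z) = 0 := by
  constructor
  · have hkey := key_lemma ν hν m n m n (fun _ => le_refl n)
    rw [if_pos ⟨rfl, rfl⟩] at hkey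
    have hcast : ∀ z : ℂ, ((‖complexHermite ν m n z (starRingEnd ℂ z)‖^2
          * Real.exp (-ν * Complex.normSq z) : ℝ) : ℂ)
        = complexHermite ν m n z (starRingEnd ℂ z)
            * starRingEnd ℂ (complexHermite ν m n z (starRingEnd ℂ z))
            * Complex.exp (-(ν:ℂ) * Complex.normSq z) := by
      intro z
      rw [Complex.mul_conj]
      simp only [Complex.normSq_eq_norm_sq]
      rw [show -(ν:ℂ) * ((‖z‖^2 : ℝ) : ℂ) = ((-ν * ‖z‖^2 : ℝ) : ℂ) by
        push_cast; ring]
      rw [← Complex.ofReal_exp]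
      push_cast
      ring
    have h2 : ((∫ z : ℂ, ‖complexHermite ν m n z (starRingEnd ℂ z)‖^2
          * Real.exp (-ν * Complex.normSq z) : ℝ) : ℂ)
        = ((Real.pi / ν * m.factorial * n.factorial * ν^(m+n) : ℝ) : ℂ) := by
      rw [← hkey, ← integral_congr_ae (Filter.Eventually.of_forall hcast)]
      exact integral_ofReal.symm
    have := Complex.ofReal_injective h2
    linarith [this]
  · intro m' n' hne
    by_cases hb : m + n' = n + m'
    · by_cases hnn : n ≤ n'
      · have hk := key_lemma ν hν m n m' n' (fun _ => hnn)
        rwa [if_neg (fun h => hne (by rw [h.1, h.2]))] at hk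
      · have hkey := key_lemma ν hν m' n' m n (fun _ => by omega)
        rw [if_neg (fun h => hne (by rw [h.1.symm, h.2.symm]))] at hkey
        have hconj : (∫ z : ℂ, complexHermite ν m n z (starRingEnd ℂ z)
              * starRingEnd ℂ (complexHermite ν m' n' z (starRingEnd ℂ z))
              * Complex.exp (-(ν:ℂ) * Complex.normSq z))
            = starRingEnd ℂ (∫ z : ℂ, complexHermite ν m' n' z (starRingEnd ℂ z)
              * starRingEnd ℂ (complexHermite ν m n z (starRingEnd ℂ z))
              * Complex.exp (-(ν:ℂ) * Complex.normSq z)) := by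
          rw [← integral_conj]
          refine integral_congr_ae (Filter.Eventually.of_forall fun z => ?_)
          simp only [map_mul, Complex.conj_conj, ← Complex.exp_conj, map_neg,
            Complex.conj_ofReal]
          ring
        rw [hconj, hkey, map_zero]
    · have hk := key_lemma ν hν m n m' n' (fun h => absurd h hb)
      rwa [if_neg (fun h => hb (by rw [h.1, h.2]; omega))] at hk
end
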